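/- Let 2 ≤ k ≤ n, let α ∈ I(k,n), and let f_1, …, f_n ∈ C²(ℝ). Define F : ℝⁿ → ℝ by F(x) = ∏_{i=1}^n f_i(x_i) and g_i := f_i'' f_i − (f_i')² for i = 1,…,n. Then, at every x ∈ ℝⁿ, M_α^α(D²F) = ( ∏_{i ∉ α} f_i(x_i) )^k ( ∏_{i ∈ α} f_i(x_i) )^{k−2} [ ∏_{i ∈ α} g_i(x_i) + ∑_{j ∈ α} ( ∏_{i ∈ α, i ≠ j} g_i(x_i) ) (f_j'(x_j))² ]. -/

import Mathlib

open MeasureTheory Filter Topology Finset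

noncomputable section

/-- Euclidean `n`-space. -/
abbrev Eu (n : ℕ) : Type := EuclideanSpace ℝ (Fin n)

/-- The partial derivative `∂ᵢ u`. -/
noncomputable def pd {n : ℕ} (i : Fin n) (u : Eu n → ℝ) : Eu n → ℝ :=
  fun x => fderiv ℝ u x (EuclideanSpace.single i 1)

/-- The second partial derivative `∂ᵢ∂ⱼ u`. -/
noncomputable def pd2 {n : ℕ} (i j : Fin n) (u : Eu n → ℝ) : Eu n → ℝ :=
  pd i (pd j u)

/-- The Hessian matrix `D²u` of `u`. -/
noncomputable def hess {n : ℕ} (u : Eu n → ℝ) (x : Eu n) : Matrix (Fin n) (Fin n) ℝ :=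
  Matrix.of fun i j => pd2 i j u x

/-- The minor `M_r^c(A)`: the determinant of the submatrix of `A` with rows `r` and
columns `c` (both taken in increasing order); `0` if the cardinalities differ. -/
noncomputable def minor {N : ℕ} (A : Matrix (Fin N) (Fin N) ℝ) (r c : Finset (Fin N)) : ℝ :=
  if h : c.card = r.card then
    (Matrix.of fun i j : Fin r.card =>
      A ((r.orderIsoOfFin rfl i : Fin N)) ((c.orderIsoOfFin h j : Fin N))).det
  else 0

/-- The `k`-Hessian `F_k[u] = ∑_{α ∈ I(k,n)} M_α^α(D²u)`. -/
noncomputable def fkH {n : ℕ} (k : ℕ) (u : Eu n → ℝ) (x : Eu n) : ℝ :=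
  ∑ s ∈ Finset.univ.filter (fun s : Finset (Fin n) => s.card = k), minor (hess u x) s s

/-! ### Auxiliary algebraic lemmas -/

/-- The determinant expression appearing as the minor of the Hessian of a product function. -/
noncomputable def lhsE {R : Type*} [CommRing R] (k : ℕ) (d a b : Fin k → R) : R :=
  (Matrix.of fun i j : Fin k => if i = j then b i * ∏ l ∈ univ.erase i, d l
      else a i * a j * ∏ l ∈ (univ.erase i).erase j, d l).det

/-- The closed form of that determinant. -/
noncomputable def rhsE {R : Type*} [CommRing R] (k : ℕ) (d a b : Fin k → R) : R :=
  (∏ i, d i) ^ (k - 2) *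
      ((∏ i, (b i * d i - a i ^ 2)) +
        ∑ j, (∏ i ∈ univ.erase j, (b i * d i - a i ^ 2)) * a j ^ 2)

lemma map_lhsE {R S : Type*} [CommRing R] [CommRing S] (ψ : R →+* S) (k : ℕ)
    (d a b : Fin k → R) :
    ψ (lhsE k d a b) = lhsE k (ψ ∘ d) (ψ ∘ a) (ψ ∘ b) := by
  rw [lhsE, RingHom.map_det, lhsE]
  congr 1
  ext i j
  simp only [RingHom.mapMatrix_apply, Matrix.map_apply, Matrix.of_apply, apply_ite ψ,
    map_mul, map_prod, Function.comp_apply]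

lemma map_rhsE {R S : Type*} [CommRing R] [CommRing S] (ψ : R →+* S) (k : ℕ)
    (d a b : Fin k → R) :
    ψ (rhsE k d a b) = rhsE k (ψ ∘ d) (ψ ∘ a) (ψ ∘ b) := by
  simp only [rhsE, map_mul, map_pow, map_prod, map_add, map_sum, map_sub, Function.comp_apply]

lemma det_key_field {K : Type*} [Field K] (k : ℕ) (hk : 2 ≤ k)
    (d a b : Fin k → K) (hd : ∀ i, d i ≠ 0) (hg : ∀ i, b i * d i - a i ^ 2 ≠ 0) :
    lhsE k d a b = rhsE k d a b := by
  classical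
  rw [lhsE, rhsE]
  set g : Fin k → K := fun i => b i * d i - a i ^ 2 with hgdef
  set M : Matrix (Fin k) (Fin k) K := Matrix.of fun i j : Fin k =>
    if i = j then b i * ∏ l ∈ univ.erase i, d l
    else a i * a j * ∏ l ∈ (univ.erase i).erase j, d l with hM
  set C : Matrix (Fin k) (Fin k) K := Matrix.of fun i j : Fin k =>
    a i * a j + if i = j then g i else 0 with hC
  have step1 : M * Matrix.diagonal d =
      Matrix.diagonal (fun i => ∏ l ∈ univ.erase i, d l) * C := by
    ext i j
    rw [Matrix.mul_diagonal, Matrix.diagonal_mul]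
    by_cases h : i = j
    · subst h
      simp [hM, hC, hgdef]
      ring
    · simp only [hM, hC, Matrix.of_apply, if_neg h, add_zero]
      have : (∏ l ∈ (univ.erase i).erase j, d l) * d j = ∏ l ∈ univ.erase i, d l := by
        rw [mul_comm]
        exact Finset.mul_prod_erase _ _ (by simp [Ne.symm h])
      rw [mul_assoc, this]
      ring
  have hdetC : C.det = (∏ i, g i) +
      ∑ j, (∏ i ∈ univ.erase j, g i) * a j ^ 2 := by
    have hC2 : C = Matrix.diagonal g *
        (1 + Matrix.replicateCol (Fin 1) (fun i => a i / g i) * Matrix.replicateRow (Fin 1) a) := by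
      ext i j
      rw [Matrix.diagonal_mul]
      have hent : ((1 + Matrix.replicateCol (Fin 1) (fun i => a i / g i) * Matrix.replicateRow (Fin 1) a :
            Matrix (Fin k) (Fin k) K)) i j
          = (if i = j then 1 else 0) + (a i / g i) * a j := by
        simp [Matrix.add_apply, Matrix.one_apply, Matrix.mul_apply, Matrix.replicateCol, Matrix.replicateRow]
      rw [hent, mul_add, mul_ite, mul_one, mul_zero, ← mul_assoc,
        mul_div_cancel₀ _ (hg i)]
      simp only [hC, Matrix.of_apply]
      by_cases h : i = j <;> simp [h, add_comm]
    rw [hC2, Matrix.det_mul, Matrix.det_diagonal, (show (1 + Matrix.replicateCol (Fin 1) (fun i => a i / g i) *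
      Matrix.replicateRow (Fin 1) a : Matrix (Fin k) (Fin k) K).det =
      1 + dotProduct a (fun i => a i / g i) by
      convert Matrix.det_one_add_replicateCol_mul_replicateRow (ι := Fin 1)
        (fun i => a i / g i) a)]
    have hdp : dotProduct a (fun i => a i / g i) = ∑ i, a i ^ 2 / g i := by
      simp only [dotProduct]
      exact Finset.sum_congr rfl fun i _ => by rw [sq]; ring
    rw [hdp, mul_add, mul_one, Finset.mul_sum]
    congr 1
    refine Finset.sum_congr rfl fun j _ => ?_
    rw [← Finset.mul_prod_erase _ _ (Finset.mem_univ j)]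
    field_simp [hg j]
    rw [div_eq_iff (hg j)]
    ring
  have hpd : (∏ i, d i) ≠ 0 := Finset.prod_ne_zero_iff.2 fun i _ => hd i
  have step2 : M.det * ∏ i, d i =
      (∏ i, d i) ^ (k - 1) * C.det := by
    have h1 := congrArg Matrix.det step1
    rw [Matrix.det_mul, Matrix.det_mul, Matrix.det_diagonal, Matrix.det_diagonal] at h1
    rw [h1]
    congr 1
    have he : ∀ i : Fin k, (∏ l ∈ univ.erase i, d l) = (∏ l, d l) / d i := fun i => by
      rw [eq_div_iff (hd i), mul_comm]
      exact Finset.mul_prod_erase _ _ (Finset.mem_univ i)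
    rw [Finset.prod_congr rfl fun i _ => he i, Finset.prod_div_distrib, Finset.prod_const,
      Finset.card_univ, Fintype.card_fin]
    rw [div_eq_iff hpd, ← pow_succ]
    congr 1
    omega
  have hfin : M.det * ∏ i, d i = ((∏ i, d i) ^ (k - 2) *
      ((∏ i, g i) + ∑ j, (∏ i ∈ univ.erase j, g i) * a j ^ 2)) * ∏ i, d i := by
    rw [step2, hdetC]
    have h2 : (∏ i, d i) ^ (k - 1) = (∏ i, d i) ^ (k - 2) * ∏ i, d i := by
      rw [← pow_succ]; congr 1; omega
    rw [h2]; ring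
  exact mul_right_cancel₀ hpd hfin

lemma det_key (k : ℕ) (hk : 2 ≤ k) (d a b : Fin k → ℝ) :
    lhsE k d a b = rhsE k d a b := by
  classical
  set R := MvPolynomial (Fin k × Fin 3) ℝ
  set K := FractionRing R
  set φ : R →+* K := algebraMap R K with hφ
  have hinj : Function.Injective φ := IsFractionRing.injective R K
  set D : Fin k → R := fun i => MvPolynomial.X (i, 0) with hD
  set A : Fin k → R := fun i => MvPolynomial.X (i, 1) with hA
  set B : Fin k → R := fun i => MvPolynomial.X (i, 2) with hB
  have hg0 : ∀ i, B i * D i - A i ^ 2 ≠ 0 := by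
    intro i h
    have := congrArg (MvPolynomial.eval (fun v : Fin k × Fin 3 => if v.2 = 1 then (0:ℝ) else 1)) h
    simp [hA, hB, hD] at this
  have hfield := det_key_field k hk (φ ∘ D) (φ ∘ A) (φ ∘ B)
    (fun i => by
      simp only [Function.comp_apply, hD]
      exact fun h => MvPolynomial.X_ne_zero _ (hinj (by simpa using h)))
    (fun i => by
      simp only [Function.comp_apply]
      rw [← map_mul, ← map_pow, ← map_sub]
      exact fun h => hg0 i (hinj (by simpa using h)))
  rw [← map_lhsE, ← map_rhsE] at hfield
  have hR : lhsE k D A B = rhsE k D A B := hinj hfield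
  set σ : Fin k × Fin 3 → ℝ := fun v =>
    if v.2 = 0 then d v.1 else if v.2 = 1 then a v.1 else b v.1 with hσ
  have hev := congrArg (MvPolynomial.eval σ : R →+* ℝ) hR
  rw [map_lhsE, map_rhsE] at hev
  have e1 : (MvPolynomial.eval σ : R →+* ℝ) ∘ D = d := by
    funext i; simp [hD, hσ]
  have e2 : (MvPolynomial.eval σ : R →+* ℝ) ∘ A = a := by
    funext i; simp [hA, hσ]
  have e3 : (MvPolynomial.eval σ : R →+* ℝ) ∘ B = b := by
    funext i; simp [hB, hσ]
  rwa [e1, e2, e3] at hev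

/-! ### Auxiliary analytic lemmas -/

variable {n : ℕ} {f : Fin n → ℝ → ℝ}

lemma pd_mul_prod (hfd : ∀ i, Differentiable ℝ (f i))
    (c : ℝ → ℝ) (hc : Differentiable ℝ c) (s : Finset (Fin n)) (j i : Fin n) (x : Eu n) :
    pd i (fun y : Eu n => c (y j) * ∏ l ∈ s, f l (y l)) x =
      (if j = i then deriv c (x j) * ∏ l ∈ s, f l (x l) else 0)
      + c (x j) * (if i ∈ s then deriv (f i) (x i) * ∏ l ∈ s.erase i, f l (x l) else 0) := by
  classical
  have hproj : ∀ l : Fin n, HasFDerivAt (fun y : Eu n => y l)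
      (EuclideanSpace.proj l : Eu n →L[ℝ] ℝ) x := fun l =>
    (EuclideanSpace.proj l : Eu n →L[ℝ] ℝ).hasFDerivAt
  have hφ : HasFDerivAt (fun y : Eu n => c (y j))
      ((deriv c (x j)) • (EuclideanSpace.proj j : Eu n →L[ℝ] ℝ)) x :=
    HasDerivAt.comp_hasFDerivAt x ((hc (x j)).hasDerivAt) (hproj j)
  have hψ : HasFDerivAt (fun y : Eu n => ∏ l ∈ s, f l (y l))
      (∑ l ∈ s, (∏ m ∈ s.erase l, f m (x m)) •
        ((deriv (f l) (x l)) • (EuclideanSpace.proj l : Eu n →L[ℝ] ℝ))) x := by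
    exact HasFDerivAt.finset_prod fun l _ =>
      HasDerivAt.comp_hasFDerivAt x ((hfd l (x l)).hasDerivAt) (hproj l)
  have hmul : HasFDerivAt (fun y : Eu n => c (y j) * ∏ l ∈ s, f l (y l)) _ x := hφ.mul hψ
  rw [pd, hmul.fderiv]
  have hval : ∀ l : Fin n, (EuclideanSpace.proj l : Eu n →L[ℝ] ℝ) (EuclideanSpace.single i 1)
      = if l = i then (1:ℝ) else 0 := fun l => by
    simp [EuclideanSpace.single_apply]
  simp only [ContinuousLinearMap.add_apply, ContinuousLinearMap.smul_apply,
    ContinuousLinearMap.coe_sum', Finset.sum_apply, hval, smul_eq_mul,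
    mul_ite, mul_one, mul_zero]
  rw [Finset.sum_ite_eq' s i (fun l => (∏ m ∈ s.erase l, f m (x m)) * deriv (f l) (x l))]
  by_cases h : j = i <;> by_cases h2 : i ∈ s <;> simp [h, h2] <;> try ring
  try tauto

lemma pd_prod (hfd : ∀ i, Differentiable ℝ (f i)) (j : Fin n) :
    pd j (fun y : Eu n => ∏ l, f l (y l)) =
      fun x => deriv (f j) (x j) * ∏ l ∈ univ.erase j, f l (x l) := by
  funext x
  have hF : (fun y : Eu n => ∏ l, f l (y l)) =
      fun y => f j (y j) * ∏ l ∈ univ.erase j, f l (y l) := by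
    funext y; exact (Finset.mul_prod_erase univ (fun l => f l (y l)) (mem_univ j)).symm
  rw [hF, pd_mul_prod hfd (f j) (hfd j) _ j j x]
  simp

lemma pd2_prod (hfd : ∀ i, Differentiable ℝ (f i))
    (hfd1 : ∀ i, Differentiable ℝ (deriv (f i))) (i j : Fin n) (x : Eu n) :
    pd2 i j (fun y : Eu n => ∏ l, f l (y l)) x =
      if i = j then deriv (deriv (f j)) (x j) * ∏ l ∈ univ.erase j, f l (x l)
      else deriv (f i) (x i) * deriv (f j) (x j) *
        ∏ l ∈ (univ.erase j).erase i, f l (x l) := by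
  rw [pd2, pd_prod hfd j, pd_mul_prod hfd (deriv (f j)) (hfd1 j) _ j i x]
  by_cases h : i = j
  · subst h; simp
  · have h' : ¬ j = i := fun hh => h hh.symm
    simp [h, h', Finset.mem_erase]
    ring

theorem stmt12 (n k : ℕ) (hk : 2 ≤ k) (hkn : k ≤ n)
    (f : Fin n → ℝ → ℝ) (hf : ∀ i, ContDiff ℝ 2 (f i))
    (α : Finset (Fin n)) (hα : α.card = k) :
    ∀ x : Eu n,
      minor (hess (fun y : Eu n => ∏ i, f i (y i)) x) α α =
        (∏ i ∈ αᶜ, f i (x i)) ^ k * (∏ i ∈ α, f i (x i)) ^ (k - 2) *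
          ((∏ i ∈ α, (deriv (deriv (f i)) (x i) * f i (x i) - (deriv (f i) (x i)) ^ 2))
            + ∑ j ∈ α,
                (∏ i ∈ α.erase j,
                  (deriv (deriv (f i)) (x i) * f i (x i) - (deriv (f i) (x i)) ^ 2))
                  * (deriv (f j) (x j)) ^ 2) := by
  intro x
  classical
  have hfd : ∀ i, Differentiable ℝ (f i) := fun i => (hf i).differentiable (by norm_num)
  have hfd1 : ∀ i, Differentiable ℝ (deriv (f i)) := by
    intro i
    have h2 : ContDiff ℝ (1+1) (f i) := by
      rw [(by norm_num : ((1:WithTop ℕ∞)+1) = 2)]; exact hf i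
    exact ((contDiff_succ_iff_deriv.mp h2).2.2).differentiable (by norm_num)
  set F : Eu n → ℝ := fun y => ∏ i, f i (y i) with hF
  set g : Fin n → ℝ := fun l =>
    deriv (deriv (f l)) (x l) * f l (x l) - (deriv (f l) (x l)) ^ 2 with hg
  set E : Fin α.card → Fin n := fun i => α.orderEmbOfFin rfl i with hE
  have hEinj : Function.Injective E := (α.orderEmbOfFin rfl).injective
  have hEmem : ∀ i, E i ∈ α := fun i => α.orderEmbOfFin_mem rfl i
  have himg : Finset.image E univ = α := by
    ext m
    simp only [Finset.mem_image, Finset.mem_univ, true_and]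
    constructor
    · rintro ⟨i, rfl⟩; exact hEmem i
    · intro hm
      obtain ⟨i, hi⟩ := (α.orderIsoOfFin rfl).surjective ⟨m, hm⟩
      refine ⟨i, ?_⟩
      have := congrArg Subtype.val hi
      simpa [hE] using this
  set P : ℝ := ∏ m ∈ αᶜ, f m (x m) with hP
  set d0 : Fin α.card → ℝ := fun i => f (E i) (x (E i)) with hd0
  set a0 : Fin α.card → ℝ := fun i => deriv (f (E i)) (x (E i)) with ha0
  set b0 : Fin α.card → ℝ := fun i => deriv (deriv (f (E i))) (x (E i)) with hb0
  have hsplit : ∀ t : Finset (Fin n), t ⊆ α →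
      ∏ l ∈ αᶜ ∪ t, f l (x l) = P * ∏ l ∈ t, f l (x l) := fun t ht =>
    Finset.prod_union ((disjoint_compl_left : Disjoint αᶜ α).mono_right ht)
  have hU1 : ∀ m ∈ α, (univ : Finset (Fin n)).erase m = αᶜ ∪ α.erase m := by
    intro m hm
    ext l
    simp only [Finset.mem_erase, Finset.mem_univ, and_true, Finset.mem_union,
      Finset.mem_compl]
    have : l ∉ α → l ≠ m := fun h hlm => h (hlm ▸ hm)
    tauto
  have hU2 : ∀ m m', m ∈ α → m' ∈ α →
      ((univ : Finset (Fin n)).erase m).erase m' = αᶜ ∪ (α.erase m).erase m' := by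
    intro m m' hm hm'
    ext l
    simp only [Finset.mem_erase, Finset.mem_univ, and_true, Finset.mem_union,
      Finset.mem_compl]
    have h1 : l ∉ α → l ≠ m := fun h hlm => h (hlm ▸ hm)
    have h2 : l ∉ α → l ≠ m' := fun h hlm => h (hlm ▸ hm')
    tauto
  have hprodim : ∀ (s : Finset (Fin α.card)) (G : Fin n → ℝ),
      ∏ m ∈ s, G (E m) = ∏ l ∈ s.image E, G l :=
    fun s G => (Finset.prod_image fun m _ m' _ h => hEinj h).symm
  have hsumim : ∀ (s : Finset (Fin α.card)) (G : Fin n → ℝ),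
      ∑ m ∈ s, G (E m) = ∑ l ∈ s.image E, G l :=
    fun s G => (Finset.sum_image fun m _ m' _ h => hEinj h).symm
  have himg_erase : ∀ j : Fin α.card,
      (univ.erase j).image E = α.erase (E j) := by
    intro j
    rw [Finset.image_erase hEinj, himg]
  have himg_erase2 : ∀ i j : Fin α.card,
      ((univ.erase j).erase i).image E = (α.erase (E j)).erase (E i) := by
    intro i j
    rw [Finset.image_erase hEinj, Finset.image_erase hEinj, himg]
  have hmat : (Matrix.of fun i j : Fin α.card =>
        hess F x ((α.orderIsoOfFin rfl i : Fin n)) ((α.orderIsoOfFin rfl j : Fin n)))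
      = P • (Matrix.of fun i j : Fin α.card =>
          if i = j then b0 i * ∏ l ∈ univ.erase i, d0 l
          else a0 i * a0 j * ∏ l ∈ (univ.erase i).erase j, d0 l) := by
    ext i j
    have hcoe : ∀ m : Fin α.card, ((α.orderIsoOfFin rfl m : Fin n)) = E m := fun m => rfl
    rw [Matrix.smul_apply, Matrix.of_apply, Matrix.of_apply, hcoe, hcoe]
    show pd2 (E i) (E j) F x = _
    rw [hF, pd2_prod hfd hfd1 (E i) (E j) x]
    by_cases h : i = j
    · subst h
      rw [if_pos rfl, if_pos rfl]
      rw [hU1 (E i) (hEmem i), hsplit _ (Finset.erase_subset _ _)]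
      have hpe : ∏ l ∈ univ.erase i, d0 l = ∏ l ∈ α.erase (E i), f l (x l) :=
        (hprodim (univ.erase i) (fun l => f l (x l))).trans (by rw [himg_erase])
      rw [hpe]
      simp only [smul_eq_mul]
      ring
    · have hne : E i ≠ E j := fun hh => h (hEinj hh)
      rw [if_neg hne, if_neg h]
      rw [hU2 (E j) (E i) (hEmem j) (hEmem i),
        hsplit _ ((Finset.erase_subset _ _).trans (Finset.erase_subset _ _))]
      have hpe : ∏ l ∈ (univ.erase i).erase j, d0 l
          = ∏ l ∈ (α.erase (E j)).erase (E i), f l (x l) := by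
        rw [Finset.erase_right_comm]
        exact (hprodim ((univ.erase j).erase i) (fun l => f l (x l))).trans
          (by rw [himg_erase2])
      rw [hpe]
      simp only [smul_eq_mul]
      ring
  have hk' : 2 ≤ α.card := by rw [hα]; exact hk
  have hdet := det_key α.card hk' d0 a0 b0
  unfold lhsE rhsE at hdet
  have t1 : ∏ i : Fin α.card, d0 i = ∏ l ∈ α, f l (x l) :=
    (hprodim univ (fun l => f l (x l))).trans (by rw [himg])
  have t2 : ∏ i : Fin α.card, (b0 i * d0 i - a0 i ^ 2) = ∏ l ∈ α, g l :=
    (hprodim univ g).trans (by rw [himg])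
  have t3 : ∑ j : Fin α.card, (∏ i ∈ univ.erase j, (b0 i * d0 i - a0 i ^ 2)) * a0 j ^ 2
      = ∑ j ∈ α, (∏ l ∈ α.erase j, g l) * (deriv (f j) (x j)) ^ 2 := by
    have step : ∀ j : Fin α.card,
        (∏ i ∈ univ.erase j, (b0 i * d0 i - a0 i ^ 2)) * a0 j ^ 2
        = (∏ l ∈ α.erase (E j), g l) * (deriv (f (E j)) (x (E j))) ^ 2 := by
      intro j
      congr 1
      exact (hprodim (univ.erase j) g).trans (by rw [himg_erase])
    rw [Finset.sum_congr rfl fun j _ => step j]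
    exact (hsumim univ (fun l => (∏ m ∈ α.erase l, g m) * (deriv (f l) (x l)) ^ 2)).trans
      (by rw [himg])
  unfold minor
  rw [dif_pos rfl]
  rw [show (Matrix.of fun i j : Fin α.card =>
        hess F x ((α.orderIsoOfFin rfl i : Fin n)) ((α.orderIsoOfFin rfl j : Fin n)))
      = _ from hmat]
  rw [Matrix.det_smul, hdet, t1, t2, t3]
  rw [Fintype.card_fin, hα]
  ring

end
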